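/- Let p(t), t∈[0,1], be a smooth path of positive probability vectors whose square-root path r(t) = 2√(p(t)) traverses the great-circle geodesic r(t) = (sin((1−t)L/2)·r(0) + sin(tL/2)·r(1))/sin(L/2) on the radius-2 sphere, where L is the Hellinger angle between p(0) and p(1) with 0 < L < π. Then p(t) = (sin((1−t)L/2)·√(p(0)) + sin(tL/2)·√(p(1)))²/sin²(L/2) componentwise, this is a probability vector for every t, the path has constant Fisher speed L, and its total Fisher length is exactly L = 2 arccos(∑_i √(p_i(0)p_i(1))). -/

import Mathlib

open Real Set

theorem slerp_path_is_fisher_geodesic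
    {ι : Type*} [Fintype ι] (p₀ p₁ : ι → ℝ)
    (h₀pos : ∀ i, 0 < p₀ i) (h₁pos : ∀ i, 0 < p₁ i)
    (h₀sum : ∑ i, p₀ i = 1) (h₁sum : ∑ i, p₁ i = 1)
    (L : ℝ) (hL : L = 2 * Real.arccos (∑ i, Real.sqrt (p₀ i * p₁ i)))
    (hL0 : 0 < L) (hLπ : L < π)
    (q : ℝ → ι → ℝ)
    (hq : ∀ t i, q t i =
      (Real.sin ((1 - t) * L / 2) * Real.sqrt (p₀ i)
        + Real.sin (t * L / 2) * Real.sqrt (p₁ i)) ^ 2 / Real.sin (L / 2) ^ 2) :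
    q 0 = p₀ ∧ q 1 = p₁ ∧
    (∀ t ∈ Icc (0:ℝ) 1, (∀ i, 0 ≤ q t i) ∧ ∑ i, q t i = 1) ∧
    (∀ t ∈ Icc (0:ℝ) 1,
      Real.sqrt (∑ i, (deriv (fun s => q s i) t) ^ 2 / q t i) = L) ∧
    (∫ t in (0:ℝ)..1,
        Real.sqrt (∑ i, (deriv (fun s => q s i) t) ^ 2 / q t i)) = L := by
  have hpi : (0:ℝ) < π := Real.pi_pos
  have hs : 0 < Real.sin (L / 2) :=
    Real.sin_pos_of_pos_of_lt_pi (by linarith) (by linarith)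
  have hsne : Real.sin (L / 2) ≠ 0 := ne_of_gt hs
  set c := ∑ i, Real.sqrt (p₀ i * p₁ i) with hc
  have hc0 : 0 ≤ c := Finset.sum_nonneg fun i _ => Real.sqrt_nonneg _
  have hc1 : c ≤ 1 := by
    have h := Finset.sum_sq_le_sum_mul_sum_of_sq_eq_mul Finset.univ
      (r := fun i => Real.sqrt (p₀ i * p₁ i)) (f := p₀) (g := p₁)
      (fun i _ => (h₀pos i).le) (fun i _ => (h₁pos i).le)
      (fun i _ => Real.sq_sqrt (mul_nonneg (h₀pos i).le (h₁pos i).le))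
    rw [h₀sum, h₁sum] at h
    nlinarith
  have hcos : Real.cos (L / 2) = c := by
    have hhalf : L / 2 = Real.arccos c := by rw [hL]; ring
    rw [hhalf, Real.cos_arccos (by linarith) hc1]
  -- abbreviations
  have hroot₀ : ∀ i, Real.sqrt (p₀ i) ^ 2 = p₀ i := fun i => Real.sq_sqrt (h₀pos i).le
  have hroot₁ : ∀ i, Real.sqrt (p₁ i) ^ 2 = p₁ i := fun i => Real.sq_sqrt (h₁pos i).le
  have hrootm : ∀ i, Real.sqrt (p₀ i * p₁ i) = Real.sqrt (p₀ i) * Real.sqrt (p₁ i) :=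
    fun i => Real.sqrt_mul (h₀pos i).le _
  -- trig identities at a = (1-t)L/2, b = tL/2 (a + b = L/2)
  have hid1 : ∀ t : ℝ, Real.sin ((1 - t) * L / 2) ^ 2 + Real.sin (t * L / 2) ^ 2
      + 2 * Real.sin ((1 - t) * L / 2) * Real.sin (t * L / 2) * c
      = Real.sin (L / 2) ^ 2 := by
    intro t
    have hab : (1 - t) * L / 2 + t * L / 2 = L / 2 := by ring
    rw [← hcos, ← hab, Real.sin_add, Real.cos_add]
    nlinarith [Real.sin_sq_add_cos_sq ((1 - t) * L / 2), Real.sin_sq_add_cos_sq (t * L / 2)]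
  have hid2 : ∀ t : ℝ, Real.cos ((1 - t) * L / 2) ^ 2 + Real.cos (t * L / 2) ^ 2
      - 2 * Real.cos ((1 - t) * L / 2) * Real.cos (t * L / 2) * c
      = Real.sin (L / 2) ^ 2 := by
    intro t
    have hab : (1 - t) * L / 2 + t * L / 2 = L / 2 := by ring
    rw [← hcos, ← hab, Real.sin_add, Real.cos_add]
    nlinarith [Real.sin_sq_add_cos_sq ((1 - t) * L / 2), Real.sin_sq_add_cos_sq (t * L / 2)]
  -- sum of q t equals 1 for every t
  have hsum1 : ∀ t : ℝ, ∑ i, q t i = 1 := by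
    intro t
    have hexp : ∀ i, q t i =
        (Real.sin ((1 - t) * L / 2) ^ 2 * p₀ i
          + 2 * Real.sin ((1 - t) * L / 2) * Real.sin (t * L / 2) * Real.sqrt (p₀ i * p₁ i)
          + Real.sin (t * L / 2) ^ 2 * p₁ i) / Real.sin (L / 2) ^ 2 := by
      intro i
      rw [hq]
      congr 1
      rw [hrootm i]
      linear_combination (Real.sin ((1 - t) * L / 2)) ^ 2 * hroot₀ i
        + (Real.sin (t * L / 2)) ^ 2 * hroot₁ i
    calc ∑ i, q t i
        = (∑ i, (Real.sin ((1 - t) * L / 2) ^ 2 * p₀ i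
            + 2 * Real.sin ((1 - t) * L / 2) * Real.sin (t * L / 2) * Real.sqrt (p₀ i * p₁ i)
            + Real.sin (t * L / 2) ^ 2 * p₁ i)) / Real.sin (L / 2) ^ 2 := by
          rw [Finset.sum_div]; exact Finset.sum_congr rfl fun i _ => hexp i
      _ = (Real.sin ((1 - t) * L / 2) ^ 2 * 1
            + 2 * Real.sin ((1 - t) * L / 2) * Real.sin (t * L / 2) * c
            + Real.sin (t * L / 2) ^ 2 * 1) / Real.sin (L / 2) ^ 2 := by
          rw [Finset.sum_add_distrib, Finset.sum_add_distrib, ← Finset.mul_sum,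
            ← Finset.mul_sum, ← Finset.mul_sum, h₀sum, h₁sum, hc]
      _ = 1 := by
          rw [div_eq_one_iff_eq (by positivity)]
          linear_combination hid1 t
  -- positivity of the numerator on [0,1]
  have hN : ∀ t ∈ Icc (0:ℝ) 1, ∀ i,
      0 < Real.sin ((1 - t) * L / 2) * Real.sqrt (p₀ i)
          + Real.sin (t * L / 2) * Real.sqrt (p₁ i) := by
    intro t ht i
    obtain ⟨ht0, ht1⟩ := ht
    have ha0 : 0 ≤ (1 - t) * L / 2 := by
      have : 0 ≤ 1 - t := by linarith
      positivity
    have hb0 : 0 ≤ t * L / 2 := by positivity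
    have ha1 : (1 - t) * L / 2 ≤ L / 2 := by nlinarith
    have hb1 : t * L / 2 ≤ L / 2 := by nlinarith
    have hsa : 0 ≤ Real.sin ((1 - t) * L / 2) :=
      Real.sin_nonneg_of_nonneg_of_le_pi ha0 (by linarith)
    have hsb : 0 ≤ Real.sin (t * L / 2) :=
      Real.sin_nonneg_of_nonneg_of_le_pi hb0 (by linarith)
    rcases lt_or_eq_of_le ht1 with h | h
    · have : 0 < Real.sin ((1 - t) * L / 2) :=
        Real.sin_pos_of_pos_of_lt_pi (by nlinarith) (by linarith)
      have := mul_pos this (Real.sqrt_pos.2 (h₀pos i))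
      nlinarith [mul_nonneg hsb (Real.sqrt_nonneg (p₁ i))]
    · subst h
      have hb : (1 - 1) * L / 2 = 0 := by ring
      have : 0 < Real.sin ((1:ℝ) * L / 2) := by
        rw [one_mul]; exact hs
      have := mul_pos this (Real.sqrt_pos.2 (h₁pos i))
      nlinarith [mul_nonneg hsa (Real.sqrt_nonneg (p₀ i))]
  have hqpos : ∀ t ∈ Icc (0:ℝ) 1, ∀ i, 0 < q t i := by
    intro t ht i
    rw [hq]
    exact div_pos (pow_pos (hN t ht i) 2) (pow_pos hs 2)
  -- derivative
  have hderiv : ∀ t : ℝ, ∀ i, deriv (fun s => q s i) t =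
      2 * (Real.sin ((1 - t) * L / 2) * Real.sqrt (p₀ i)
          + Real.sin (t * L / 2) * Real.sqrt (p₁ i))
        * (Real.cos ((1 - t) * L / 2) * (-(L / 2)) * Real.sqrt (p₀ i)
          + Real.cos (t * L / 2) * (L / 2) * Real.sqrt (p₁ i))
        / Real.sin (L / 2) ^ 2 := by
    intro t i
    have hqe : (fun s => q s i) = fun s =>
        (Real.sin ((1 - s) * L / 2) * Real.sqrt (p₀ i)
          + Real.sin (s * L / 2) * Real.sqrt (p₁ i)) ^ 2 / Real.sin (L / 2) ^ 2 :=
      funext fun s => hq s i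
    have ha : HasDerivAt (fun s : ℝ => (1 - s) * L / 2) (-(L / 2)) t := by
      have h : HasDerivAt (fun s : ℝ => (1 - s) * L / 2) ((0 - 1) * L / 2) t :=
        (((hasDerivAt_const t (1:ℝ)).sub (hasDerivAt_id t)).mul_const L).div_const 2
      convert h using 1; ring
    have hb : HasDerivAt (fun s : ℝ => s * L / 2) (L / 2) t := by
      have h : HasDerivAt (fun s : ℝ => s * L / 2) (1 * L / 2) t :=
        ((hasDerivAt_id t).mul_const L).div_const 2
      simpa using h
    have hg : HasDerivAt (fun s =>
        Real.sin ((1 - s) * L / 2) * Real.sqrt (p₀ i)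
          + Real.sin (s * L / 2) * Real.sqrt (p₁ i))
        (Real.cos ((1 - t) * L / 2) * (-(L / 2)) * Real.sqrt (p₀ i)
          + Real.cos (t * L / 2) * (L / 2) * Real.sqrt (p₁ i)) t :=
      ((ha.sin).mul_const _).add ((hb.sin).mul_const _)
    have hQ : HasDerivAt (fun s =>
        (Real.sin ((1 - s) * L / 2) * Real.sqrt (p₀ i)
          + Real.sin (s * L / 2) * Real.sqrt (p₁ i)) ^ 2 / Real.sin (L / 2) ^ 2)
        (2 * (Real.sin ((1 - t) * L / 2) * Real.sqrt (p₀ i)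
          + Real.sin (t * L / 2) * Real.sqrt (p₁ i))
        * (Real.cos ((1 - t) * L / 2) * (-(L / 2)) * Real.sqrt (p₀ i)
          + Real.cos (t * L / 2) * (L / 2) * Real.sqrt (p₁ i))
        / Real.sin (L / 2) ^ 2) t := by
      have := (hg.fun_pow 2).div_const (Real.sin (L / 2) ^ 2)
      exact this.congr_deriv (by simp only [Nat.cast_ofNat, Nat.reduceSub, pow_one])
    rw [hqe]
    exact hQ.deriv
  -- constant speed squared
  have hspeed2 : ∀ t ∈ Icc (0:ℝ) 1,
      ∑ i, (deriv (fun s => q s i) t) ^ 2 / q t i = L ^ 2 := by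
    intro t ht
    have key : ∀ N D s : ℝ, N ≠ 0 → s ≠ 0 →
        (2 * N * D / s ^ 2) ^ 2 / (N ^ 2 / s ^ 2) = 4 * D ^ 2 / s ^ 2 := by
      intro N D s hN hs; field_simp; ring
    have hterm : ∀ i, (deriv (fun s => q s i) t) ^ 2 / q t i =
        4 * (Real.cos ((1 - t) * L / 2) * (-(L / 2)) * Real.sqrt (p₀ i)
          + Real.cos (t * L / 2) * (L / 2) * Real.sqrt (p₁ i)) ^ 2
          / Real.sin (L / 2) ^ 2 := by
      intro i
      rw [hderiv t i, hq]
      exact key _ _ _ (ne_of_gt (hN t ht i)) hsne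
    calc ∑ i, (deriv (fun s => q s i) t) ^ 2 / q t i
        = ∑ i, (4 * (Real.cos ((1 - t) * L / 2) * (-(L / 2)) * Real.sqrt (p₀ i)
            + Real.cos (t * L / 2) * (L / 2) * Real.sqrt (p₁ i)) ^ 2
            / Real.sin (L / 2) ^ 2) := Finset.sum_congr rfl fun i _ => hterm i
      _ = (∑ i, 4 * (Real.cos ((1 - t) * L / 2) * (-(L / 2)) * Real.sqrt (p₀ i)
            + Real.cos (t * L / 2) * (L / 2) * Real.sqrt (p₁ i)) ^ 2)
            / Real.sin (L / 2) ^ 2 := by rw [← Finset.sum_div]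
      _ = (∑ i, (4 * (L / 2) ^ 2) * (Real.cos ((1 - t) * L / 2) ^ 2 * p₀ i
            - 2 * Real.cos ((1 - t) * L / 2) * Real.cos (t * L / 2)
              * Real.sqrt (p₀ i * p₁ i)
            + Real.cos (t * L / 2) ^ 2 * p₁ i)) / Real.sin (L / 2) ^ 2 := by
          congr 1
          refine Finset.sum_congr rfl fun i _ => ?_
          rw [hrootm i]
          linear_combination (4 * (L / 2) ^ 2 * Real.cos ((1 - t) * L / 2) ^ 2) * hroot₀ i
            + (4 * (L / 2) ^ 2 * Real.cos (t * L / 2) ^ 2) * hroot₁ i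
      _ = ((4 * (L / 2) ^ 2) * (Real.cos ((1 - t) * L / 2) ^ 2 * 1
            - 2 * Real.cos ((1 - t) * L / 2) * Real.cos (t * L / 2) * c
            + Real.cos (t * L / 2) ^ 2 * 1)) / Real.sin (L / 2) ^ 2 := by
          rw [← Finset.mul_sum]
          congr 2
          rw [Finset.sum_add_distrib, Finset.sum_sub_distrib, ← Finset.mul_sum,
            ← Finset.mul_sum, ← Finset.mul_sum, h₀sum, h₁sum, hc]
      _ = L ^ 2 := by
          rw [div_eq_iff (by positivity)]
          linear_combination (4 * (L / 2) ^ 2) * hid2 t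
  have hspeed : ∀ t ∈ Icc (0:ℝ) 1,
      Real.sqrt (∑ i, (deriv (fun s => q s i) t) ^ 2 / q t i) = L := by
    intro t ht
    rw [hspeed2 t ht, Real.sqrt_sq hL0.le]
  refine ⟨?_, ?_, fun t ht => ⟨fun i => (hqpos t ht i).le, hsum1 t⟩, hspeed, ?_⟩
  · funext i
    rw [hq]
    norm_num
    rw [mul_pow, hroot₀ i, mul_comm, mul_div_assoc, div_self (by positivity), mul_one]
  · funext i
    rw [hq]
    norm_num
    rw [mul_pow, hroot₁ i, mul_comm, mul_div_assoc, div_self (by positivity), mul_one]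
  · have heq : EqOn (fun t => Real.sqrt (∑ i, (deriv (fun s => q s i) t) ^ 2 / q t i))
        (fun _ => L) (uIcc (0:ℝ) 1) := by
      intro t ht
      exact hspeed t (by rwa [uIcc_of_le zero_le_one] at ht)
    rw [intervalIntegral.integral_congr heq]
    simp
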